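/- For any finite simple graph G with a linear order σ on V(G), the First-Fit coloring of G□G with respect to the lexicographic order induced by σ on both factors satisfies FF(G□G, lex) ≤ 2Γ(G) − 2, provided Γ(G) ≥ 2 (equivalently, G has at least one edge). -/

import Mathlib

open SimpleGraph

/-- First-Fit (greedy) coloring of `G` with respect to the vertex ordering given by the
injective position function `ord` (vertex `u` comes before `v` iff `ord u < ord v`).
Each vertex receives the smallest positive integer not used on earlier neighbors. -/
noncomputable def firstFit {V : Type*} (G : SimpleGraph V) (ord : V → ℕ) : V → ℕ :=
  (InvImage.wf ord Nat.lt_wfRel.wf).fix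
    (fun v ih => sInf {c : ℕ | 1 ≤ c ∧ ∀ u, ∀ h : ord u < ord v, G.Adj u v → ih u h ≠ c})

/-- `FFColors G ord` is the number of colors used by the First-Fit coloring. -/
noncomputable def FFColors {V : Type*} [Fintype V] (G : SimpleGraph V) (ord : V → ℕ) : ℕ :=
  (Finset.univ.image (firstFit G ord)).card

open Classical in
/-- First-Fit coloring of `(G, ord)` subject to the pre-coloring `C₀` on the set `S`:
vertices of `S` keep their pre-assigned colors and are skipped by the scan; every other
vertex receives the smallest positive integer not already assigned (or pre-assigned)
to a neighbor. -/
noncomputable def firstFitWith {V : Type*} (G : SimpleGraph V) (ord : V → ℕ)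
    (S : Set V) (C₀ : V → ℕ) : V → ℕ :=
  (InvImage.wf ord Nat.lt_wfRel.wf).fix
    (fun v ih =>
      if v ∈ S then C₀ v
      else sInf {c : ℕ | 1 ≤ c ∧ (∀ u, G.Adj u v → u ∈ S → C₀ u ≠ c) ∧
        ∀ u, ∀ h : ord u < ord v, G.Adj u v → u ∉ S → ih u h ≠ c})

/-- Position function of the lexicographic order on `V × W` induced by the position
functions `σ` on `V` and `σ'` on `W` (for injective `σ, σ'`: `(u,v)` comes before
`(u',v')` iff `σ u < σ u'`, or `u = u'` and `σ' v < σ' v'`). -/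
noncomputable def lexPos {V W : Type*} [Fintype W] (σ : V → ℕ) (σ' : W → ℕ) : V × W → ℕ :=
  fun p => σ p.1 * (Finset.univ.sup σ' + 1) + σ' p.2

/-- A proper coloring with colors in the positive integers. -/
def IsProperColoring {V : Type*} (G : SimpleGraph V) (C : V → ℕ) : Prop :=
  (∀ v, 1 ≤ C v) ∧ ∀ ⦃u v⦄, G.Adj u v → C u ≠ C v

/-- `D` is a `(C, ord)`-descent: `D = {v} ∪ N` where `C v = y`, `x < y` is a (positive)
color, `N` is the set of neighbors of `v` of color `x`, and every `u ∈ N` comes after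
`v` in the order. -/
def IsDescent {V : Type*} (G : SimpleGraph V) (ord : V → ℕ) (C : V → ℕ) (D : Set V) : Prop :=
  ∃ v x, 1 ≤ x ∧ x < C v ∧
    (∀ u, G.Adj u v → C u = x → ord v < ord u) ∧
    D = insert v {u | G.Adj u v ∧ C u = x}

/-- The Grundy number: the maximum of `FFColors G ord` over all vertex orderings. -/
noncomputable def grundy {V : Type*} [Fintype V] (G : SimpleGraph V) : ℕ :=
  sSup {n | ∃ ord : V → ℕ, Function.Injective ord ∧ FFColors G ord = n}

/-- The independence number of `G`. -/
noncomputable def indepNum {V : Type*} [Fintype V] (G : SimpleGraph V) : ℕ :=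
  sSup {n | ∃ s : Finset V, (∀ u ∈ s, ∀ v ∈ s, ¬ G.Adj u v) ∧ s.card = n}

/-- An `m × n` Latin rectangle: entries in `{1, …, n}`, no repeats in rows or columns. -/
def IsLatinRectangle {m n : ℕ} (R : Fin m → Fin n → ℕ) : Prop :=
  (∀ i j, R i j ∈ Finset.Icc 1 n) ∧ (∀ i, Function.Injective (R i)) ∧
    (∀ j, Function.Injective (fun i => R i j))

/-- `S` is a greedy defining set of the rectangle `R` (cells scanned in lexicographic,
i.e. row-by-row, order): the greedy completion, which skips the cells of `S` (fixed to
their values in `R`) and places in each other cell the smallest positive integer not yet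
appearing in its row or column, reproduces `R`.  This is First-Fit on the rook's graph
`K_m □ K_n` subject to the pre-coloring of `S` by `R`. -/
noncomputable def IsRectGDS {m n : ℕ} (R : Fin m → Fin n → ℕ) (S : Set (Fin m × Fin n)) : Prop :=
  firstFitWith ((⊤ : SimpleGraph (Fin m)).boxProd (⊤ : SimpleGraph (Fin n)))
    (lexPos Fin.val Fin.val) S (fun p => R p.1 p.2) = fun p => R p.1 p.2

/-- The Latin square `L_k` of order `2^k`: the entry in row `i`, column `j` is
`2^k - (i XOR j)`; equivalently the `k`-fold tensor product of `[[2,1],[1,2]]`. -/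
def Lsquare (k : ℕ) : Fin (2 ^ k) → Fin (2 ^ k) → ℕ :=
  fun i j => 2 ^ k - (i.val ^^^ j.val)

/-! ### Auxiliary lemmas -/

private theorem aux_xor_div_two (a b : ℕ) : (a ^^^ b) / 2 = a / 2 ^^^ b / 2 := by
  apply Nat.eq_of_testBit_eq
  intro i
  simp only [← Nat.shiftRight_one, Nat.testBit_shiftRight, Nat.testBit_xor]

private theorem aux_xor_le_add (a b : ℕ) : a ^^^ b ≤ a + b := by
  induction a using Nat.strong_induction_on generalizing b with
  | _ a ih =>
    rcases Nat.eq_zero_or_pos a with rfl | ha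
    · simp
    · have h1 : (a ^^^ b) % 2 = (a + b) % 2 := Nat.xor_mod_two_eq
      have h2 := aux_xor_div_two a b
      have h3 : a / 2 ^^^ b / 2 ≤ a / 2 + b / 2 :=
        ih (a / 2) (Nat.div_lt_self ha one_lt_two) (b / 2)
      omega

private theorem firstFit_eq {V : Type*} (G : SimpleGraph V) (ord : V → ℕ) (v : V) :
    firstFit G ord v = sInf {c : ℕ | 1 ≤ c ∧
      ∀ u, ord u < ord v → G.Adj u v → firstFit G ord u ≠ c} := by
  conv_lhs => rw [firstFit, WellFounded.fix_eq]
  rfl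

private theorem firstFit_spec {V : Type*} [Fintype V] (G : SimpleGraph V) (ord : V → ℕ)
    (v : V) : 1 ≤ firstFit G ord v ∧
      ∀ u, ord u < ord v → G.Adj u v → firstFit G ord u ≠ firstFit G ord v := by
  have hne : ({c : ℕ | 1 ≤ c ∧
      ∀ u, ord u < ord v → G.Adj u v → firstFit G ord u ≠ c}).Nonempty := by
    refine ⟨Finset.univ.sup (firstFit G ord) + 1, ?_, fun u _ _ => ?_⟩
    · omega
    · have := Finset.le_sup (f := firstFit G ord) (Finset.mem_univ u)
      omega
  have h := Nat.sInf_mem hne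
  rw [← firstFit_eq] at h
  exact h

private theorem firstFit_pos {V : Type*} [Fintype V] (G : SimpleGraph V) (ord : V → ℕ)
    (v : V) : 1 ≤ firstFit G ord v := (firstFit_spec G ord v).1

private theorem firstFit_lt {V : Type*} [Fintype V] (G : SimpleGraph V) (ord : V → ℕ)
    (v : V) (t : ℕ) (h1 : 1 ≤ t) (h2 : t < firstFit G ord v) :
    ∃ u, ord u < ord v ∧ G.Adj u v ∧ firstFit G ord u = t := by
  by_contra hc
  push_neg at hc
  have hmem : t ∈ {c : ℕ | 1 ≤ c ∧
      ∀ u, ord u < ord v → G.Adj u v → firstFit G ord u ≠ c} :=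
    ⟨h1, fun u hu ha => hc u hu ha⟩
  have hle := Nat.sInf_le hmem
  rw [← firstFit_eq] at hle
  omega

private theorem firstFit_proper {V : Type*} [Fintype V] (G : SimpleGraph V) (ord : V → ℕ)
    (hord : Function.Injective ord) {u v : V} (h : G.Adj u v) :
    firstFit G ord u ≠ firstFit G ord v := by
  have hne : ord u ≠ ord v := fun he => G.ne_of_adj h (hord he)
  rcases lt_or_gt_of_ne hne with hlt | hlt
  · exact (firstFit_spec G ord v).2 u hlt h
  · exact fun he => (firstFit_spec G ord u).2 v hlt h.symm he.symm

private theorem lexPos_lt_left {V : Type*} [Fintype V] (σ : V → ℕ) {u' u : V} (v' v : V)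
    (h : σ u' < σ u) : lexPos σ σ (u', v') < lexPos σ σ (u, v) := by
  change σ u' * (Finset.univ.sup σ + 1) + σ v' < σ u * (Finset.univ.sup σ + 1) + σ v
  have hv : σ v' ≤ Finset.univ.sup σ := Finset.le_sup (Finset.mem_univ v')
  have h1 : σ u' + 1 ≤ σ u := h
  nlinarith [Nat.zero_le (σ v)]

private theorem lexPos_lt_right {V : Type*} [Fintype V] (σ : V → ℕ) (u : V) {v' v : V}
    (h : σ v' < σ v) : lexPos σ σ (u, v') < lexPos σ σ (u, v) := by
  change σ u * (Finset.univ.sup σ + 1) + σ v' < σ u * (Finset.univ.sup σ + 1) + σ v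
  omega

/-- The First-Fit coloring of `G □ G` in lexicographic order is given by the
XOR (Nim-sum) of the First-Fit colors of the coordinates. -/
private theorem boxProd_firstFit_eq {V : Type*} [Fintype V] (G : SimpleGraph V)
    (σ : V → ℕ) (hσ : Function.Injective σ) (p : V × V) :
    firstFit (G.boxProd G) (lexPos σ σ) p
      = ((firstFit G σ p.1 - 1) ^^^ (firstFit G σ p.2 - 1)) + 1 := by
  induction p using WellFounded.induction (InvImage.wf (lexPos σ σ) Nat.lt_wfRel.wf) with
  | _ p ih =>
  obtain ⟨u, v⟩ := p
  show firstFit (G.boxProd G) (lexPos σ σ) (u, v)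
      = ((firstFit G σ u - 1) ^^^ (firstFit G σ v - 1)) + 1
  have hfu : 1 ≤ firstFit G σ u := firstFit_pos G σ u
  have hfv : 1 ≤ firstFit G σ v := firstFit_pos G σ v
  rw [firstFit_eq]
  have hmem : ((firstFit G σ u - 1) ^^^ (firstFit G σ v - 1)) + 1 ∈ {c : ℕ | 1 ≤ c ∧
      ∀ q, lexPos σ σ q < lexPos σ σ (u, v) → (G.boxProd G).Adj q (u, v) →
        firstFit (G.boxProd G) (lexPos σ σ) q ≠ c} := by
    refine ⟨by omega, fun q hq hadj => ?_⟩
    rw [ih q hq]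
    rcases boxProd_adj.mp hadj with ⟨h1, h2⟩ | ⟨h1, h2⟩
    · -- q = (u', v) with u' ~ u
      have hq2 : firstFit G σ q.2 = firstFit G σ v := by rw [h2]
      have hne : firstFit G σ q.1 ≠ firstFit G σ u := firstFit_proper G σ hσ h1
      have hq1 : 1 ≤ firstFit G σ q.1 := firstFit_pos G σ q.1
      rw [hq2]
      intro hcon
      have h' : (firstFit G σ q.1 - 1) ^^^ (firstFit G σ v - 1)
          = (firstFit G σ u - 1) ^^^ (firstFit G σ v - 1) := by omega
      have h'' := Nat.xor_left_inj.mp h'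
      omega
    · -- q = (u, v') with v' ~ v
      have hq1 : firstFit G σ q.1 = firstFit G σ u := by rw [h2]
      have hne : firstFit G σ q.2 ≠ firstFit G σ v := firstFit_proper G σ hσ h1
      have hq2 : 1 ≤ firstFit G σ q.2 := firstFit_pos G σ q.2
      rw [hq1]
      intro hcon
      have h' : (firstFit G σ u - 1) ^^^ (firstFit G σ q.2 - 1)
          = (firstFit G σ u - 1) ^^^ (firstFit G σ v - 1) := by omega
      have h'' := Nat.xor_right_inj.mp h'
      omega
  refine le_antisymm (Nat.sInf_le hmem) (le_csInf ⟨_, hmem⟩ fun c hc => ?_)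
  by_contra hcon
  push_neg at hcon
  obtain ⟨hc1, hc2⟩ := hc
  have hlt : c - 1 < (firstFit G σ u - 1) ^^^ (firstFit G σ v - 1) := by omega
  rcases Nat.lt_xor_cases hlt with hcase | hcase
  · -- find earlier neighbor of u with color ((c-1) ^^^ (f v - 1)) + 1
    obtain ⟨u', hu'lt, hu'adj, hu'col⟩ :=
      firstFit_lt G σ u (((c - 1) ^^^ (firstFit G σ v - 1)) + 1) (by omega) (by omega)
    have hlex := lexPos_lt_left σ v v hu'lt
    have hadj : (G.boxProd G).Adj (u', v) (u, v) := boxProd_adj.mpr (Or.inl ⟨hu'adj, rfl⟩)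
    have hval := hc2 (u', v) hlex hadj
    rw [ih (u', v) hlex] at hval
    apply hval
    show ((firstFit G σ u' - 1) ^^^ (firstFit G σ v - 1)) + 1 = c
    rw [show firstFit G σ u' - 1 = (c - 1) ^^^ (firstFit G σ v - 1) by omega]
    rw [Nat.xor_xor_cancel_right]
    omega
  · -- find earlier neighbor of v with color (((c-1) ^^^ (f u - 1))) + 1
    obtain ⟨v', hv'lt, hv'adj, hv'col⟩ :=
      firstFit_lt G σ v (((c - 1) ^^^ (firstFit G σ u - 1)) + 1) (by omega) (by omega)
    have hlex := lexPos_lt_right σ u hv'lt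
    have hadj : (G.boxProd G).Adj (u, v') (u, v) := boxProd_adj.mpr (Or.inr ⟨hv'adj, rfl⟩)
    have hval := hc2 (u, v') hlex hadj
    rw [ih (u, v') hlex] at hval
    apply hval
    show ((firstFit G σ u - 1) ^^^ (firstFit G σ v' - 1)) + 1 = c
    rw [show firstFit G σ v' - 1 = (c - 1) ^^^ (firstFit G σ u - 1) by omega]
    rw [Nat.xor_comm (c - 1) (firstFit G σ u - 1), ← Nat.xor_assoc, Nat.xor_self, Nat.zero_xor]
    omega

/-- If `Γ(G) ≥ 2` then `FF(G □ G, lex) ≤ 2Γ(G) - 2`. -/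
theorem FF_boxProd_self_lex_le {V : Type*} [Fintype V]
    (G : SimpleGraph V) (σ : V → ℕ) (hσ : Function.Injective σ)
    (hΓ : 2 ≤ grundy G) :
    FFColors (G.boxProd G) (lexPos σ σ) ≤ 2 * grundy G - 2 := by
  classical
  have hS_bdd : BddAbove {n | ∃ ord : V → ℕ, Function.Injective ord ∧ FFColors G ord = n} := by
    refine ⟨Fintype.card V, fun n hn => ?_⟩
    obtain ⟨ord, -, hord⟩ := hn
    rw [← hord]
    unfold FFColors
    exact Finset.card_image_le.trans (by simp)
  -- G has an edge
  have hedge : ∃ x y, G.Adj x y := by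
    by_contra hno
    push_neg at hno
    have hval : ∀ ord : V → ℕ, ∀ v, firstFit G ord v = 1 := by
      intro ord v
      rw [firstFit_eq]
      have hset : {c : ℕ | 1 ≤ c ∧ ∀ u, ord u < ord v → G.Adj u v → firstFit G ord u ≠ c}
          = {c : ℕ | 1 ≤ c} := by
        ext c
        simp only [Set.mem_setOf_eq, and_iff_left_iff_imp]
        exact fun _ u _ hadj => absurd hadj (hno u v)
      rw [hset]
      have h1 : (1 : ℕ) ∈ {c : ℕ | 1 ≤ c} := by simp
      have h2 := Nat.sInf_mem (⟨1, h1⟩ : Set.Nonempty {c : ℕ | 1 ≤ c})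
      have h3 := Nat.sInf_le h1
      simp only [Set.mem_setOf_eq] at h2
      omega
    have hle : ∀ ord : V → ℕ, FFColors G ord ≤ 1 := by
      intro ord
      unfold FFColors
      have : Finset.univ.image (firstFit G ord) ⊆ {1} := by
        intro t ht
        simp only [Finset.mem_image] at ht
        obtain ⟨w, -, rfl⟩ := ht
        simp [hval ord w]
      exact (Finset.card_le_card this).trans (by simp)
    have hgr : grundy G ≤ 1 := by
      unfold grundy
      refine csSup_le ⟨FFColors G σ, σ, hσ, rfl⟩ fun n hn => ?_
      obtain ⟨ord, -, hord⟩ := hn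
      exact hord ▸ hle ord
    omega
  obtain ⟨x, y, hxy⟩ := hedge
  have : Nonempty V := ⟨x⟩
  set k := Finset.univ.sup (firstFit G σ) with hk
  have hfk : ∀ w, (firstFit G σ) w ≤ k := fun w => Finset.le_sup (Finset.mem_univ w)
  have hf1 : ∀ w, 1 ≤ (firstFit G σ) w := fun w => firstFit_pos G σ w
  have hk2 : 2 ≤ k := by
    have hne := firstFit_proper G σ hσ hxy
    have h1 := hf1 x; have h2 := hf1 y; have h3 := hfk x; have h4 := hfk y
    omega
  obtain ⟨w, -, hw⟩ := Finset.exists_mem_eq_sup Finset.univ Finset.univ_nonempty (firstFit G σ)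
  have hsub : Finset.Icc 1 k ⊆ Finset.univ.image (firstFit G σ) := by
    intro t ht
    rw [Finset.mem_Icc] at ht
    rcases eq_or_lt_of_le ht.2 with heq | hlt
    · exact Finset.mem_image.mpr ⟨w, Finset.mem_univ w, by omega⟩
    · obtain ⟨u, -, -, hu⟩ := firstFit_lt G σ w t ht.1 (by omega)
      exact Finset.mem_image.mpr ⟨u, Finset.mem_univ u, hu⟩
  have hkFF : k ≤ FFColors G σ := by
    have := Finset.card_le_card hsub
    rw [Nat.card_Icc] at this
    unfold FFColors
    omega
  have hkG : k ≤ grundy G := by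
    refine hkFF.trans (le_csSup hS_bdd ⟨σ, hσ, rfl⟩)
  have hbound : ∀ p : V × V,
      firstFit (G.boxProd G) (lexPos σ σ) p ∈ Finset.Icc 1 (2 * k - 2) := by
    intro p
    rw [boxProd_firstFit_eq G σ hσ p, Finset.mem_Icc]
    refine ⟨by omega, ?_⟩
    have h1 := hf1 p.1; have h2 := hf1 p.2; have h3 := hfk p.1; have h4 := hfk p.2
    rcases eq_or_ne ((firstFit G σ) p.1 - 1) ((firstFit G σ) p.2 - 1) with hab | hab
    · rw [hab, Nat.xor_self]
      omega
    · have hxx := aux_xor_le_add ((firstFit G σ) p.1 - 1) ((firstFit G σ) p.2 - 1)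
      set s := ((firstFit G σ) p.1 - 1) ^^^ ((firstFit G σ) p.2 - 1) with hs
      omega
  calc FFColors (G.boxProd G) (lexPos σ σ)
      ≤ (Finset.Icc 1 (2 * k - 2)).card := by
        unfold FFColors
        refine Finset.card_le_card fun t ht => ?_
        obtain ⟨p, -, rfl⟩ := Finset.mem_image.mp ht
        exact hbound p
    _ = 2 * k - 2 := by rw [Nat.card_Icc]; omega
    _ ≤ 2 * grundy G - 2 := by omega
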